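/- Let β(V) be a measurable function of a random variable V, and let e(V) := P(T = 1 | σ(V)) be the propensity score. Then β(V) is a balancing score (i.e., T is conditionally independent of V given β(V)) if and only if e(V) is a.s. equal to a σ(β(V))-measurable function, i.e., e(V) = f(β(V)) a.s. for some measurable f. Moreover, if V gives weak ignorability (Y(t) ⊥ T | V and P(T = t | σ(V)) > 0 a.s. for t ∈ {0,1}), then β(V) also gives weak ignorability: Y(t) ⊥ T | β(V) and P(T = t | σ(β(V))) > 0 a.s. -/

import Mathlib

open MeasureTheory ProbabilityTheory

open Classical in
lemma aux_iInf_rat (x : ℝ) :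
    (⨅ q : ℚ, if x ≤ (q : ℝ) then ((q : ℝ) : EReal) else ⊤) = (x : EReal) := by
  refine le_antisymm ?_ (le_iInf fun q => ?_)
  · by_contra hlt
    push_neg at hlt
    obtain ⟨q, hq1, hq2⟩ := EReal.exists_rat_btwn_of_lt hlt
    have hx : x ≤ (q : ℝ) := le_of_lt (EReal.coe_lt_coe_iff.mp hq1)
    have h2 : (⨅ r : ℚ, if x ≤ (r : ℝ) then ((r : ℝ) : EReal) else ⊤) ≤ ((q : ℝ) : EReal) :=
      iInf_le_of_le q (by rw [if_pos hx])
    exact absurd (h2.trans_lt hq2) (lt_irrefl _)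
  · split_ifs with h
    · exact_mod_cast h
    · exact le_top

open Classical in
lemma measurable_factor {Ω ℬ : Type*} [MeasurableSpace ℬ] (φ : Ω → ℬ)
    (h : Ω → ℝ) (hh : Measurable[MeasurableSpace.comap φ inferInstance] h) :
    ∃ f : ℬ → ℝ, Measurable f ∧ ∀ ω, h ω = f (φ ω) := by
  have hS : ∀ q : ℚ, ∃ S : Set ℬ, MeasurableSet S ∧ φ ⁻¹' S = {ω | h ω ≤ (q : ℝ)} := fun q =>
    hh measurableSet_Iic
  choose S hSm hSeq using hS
  set F : ℬ → EReal := fun b => ⨅ q : ℚ, if b ∈ S q then ((q : ℝ) : EReal) else ⊤ with hF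
  have hFm : Measurable F :=
    Measurable.iInf fun q => Measurable.ite (hSm q) measurable_const measurable_const
  refine ⟨fun b => (F b).toReal, measurable_ereal_toReal.comp hFm, fun ω => ?_⟩
  have hmem : ∀ q : ℚ, (φ ω ∈ S q) ↔ (h ω ≤ (q : ℝ)) := fun q => Set.ext_iff.mp (hSeq q) ω
  have hFe : F (φ ω) = ((h ω : ℝ) : EReal) := by
    rw [hF]
    calc (⨅ q : ℚ, if φ ω ∈ S q then ((q : ℝ) : EReal) else ⊤)
        = ⨅ q : ℚ, if h ω ≤ (q : ℝ) then ((q : ℝ) : EReal) else ⊤ :=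
          iInf_congr fun q => if_congr (hmem q) rfl rfl
      _ = ((h ω : ℝ) : EReal) := aux_iInf_rat (h ω)
  simp [hFe]

/-- comap σ-algebra of a map, as an abbreviation (avoids putting `MeasurableSpace Ω`
terms in the local context, which would confuse instance resolution). -/
abbrev σa {Ω γ : Type*} [MeasurableSpace γ] (X : Ω → γ) : MeasurableSpace Ω :=
  MeasurableSpace.comap X inferInstance

/-- **Balancing scores.** Let `β` be a measurable function of `V` and let
`e(V) := P(T = 1 | σ(V))` be the propensity score. Then `β(V)` is a balancing score
(`T ⟂ V | β(V)`) iff `e(V) = f(β(V))` a.s. for some measurable `f`. Moreover, if `V`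
gives weak ignorability (`Y t ⟂ T | V` and `P(T = t | σ(V)) > 0` a.s. for both `t`),
then a balancing score `β(V)` also gives weak ignorability: `Y t ⟂ T | β(V)` and
`P(T = t | σ(β(V))) > 0` a.s. -/
theorem balancing_score_iff_propensity_measurable
    {Ω 𝒱 ℬ 𝒴 : Type*}
    [MeasurableSpace Ω] [StandardBorelSpace Ω]
    [MeasurableSpace 𝒱] [MeasurableSpace ℬ] [MeasurableSpace 𝒴]
    (μ : Measure Ω) [IsProbabilityMeasure μ]
    (T : Ω → Bool) (hT : Measurable T)
    (V : Ω → 𝒱) (hV : Measurable V)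
    (Y : Bool → Ω → 𝒴) (hY : ∀ t, Measurable (Y t))
    (β : 𝒱 → ℬ) (hβ : Measurable β) :
    -- (1) balancing score iff the propensity is a measurable function of `β(V)`
    ((CondIndepFun (MeasurableSpace.comap (fun ω => β (V ω)) inferInstance)
        ((hβ.comp hV).comap_le) T V μ)
      ↔ ∃ f : ℬ → ℝ, Measurable f ∧
          (μ[(fun ω => if T ω = true then (1 : ℝ) else 0) |
              MeasurableSpace.comap V inferInstance]
            =ᵐ[μ] fun ω => f (β (V ω))))
    ∧
    -- (2) a balancing score inherits weak ignorability from `V`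
    ((∀ t, CondIndepFun (MeasurableSpace.comap V inferInstance) hV.comap_le (Y t) T μ) →
     (∀ t : Bool, ∀ᵐ ω ∂μ,
        0 < (μ[(fun ω => if T ω = t then (1 : ℝ) else 0) |
              MeasurableSpace.comap V inferInstance]) ω) →
     (CondIndepFun (MeasurableSpace.comap (fun ω => β (V ω)) inferInstance)
        ((hβ.comp hV).comap_le) T V μ) →
     ((∀ t, CondIndepFun (MeasurableSpace.comap (fun ω => β (V ω)) inferInstance)
          ((hβ.comp hV).comap_le) (Y t) T μ) ∧
      (∀ t : Bool, ∀ᵐ ω ∂μ,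
        0 < (μ[(fun ω => if T ω = t then (1 : ℝ) else 0) |
              MeasurableSpace.comap (fun ω => β (V ω)) inferInstance]) ω))) := by
  set φ : Ω → ℬ := fun ω => β (V ω) with hφdef
  have hφ : Measurable φ := hβ.comp hV
  have hmB : σa φ ≤ ‹MeasurableSpace Ω› := hφ.comap_le
  have hmV : σa V ≤ ‹MeasurableSpace Ω› := hV.comap_le
  have hBV : σa φ ≤ σa V := by
    rintro s ⟨s', hs', rfl⟩
    exact ⟨β ⁻¹' s', hβ hs', rfl⟩
  set ι : Set Ω → Ω → ℝ := fun s => s.indicator (fun _ => (1 : ℝ)) with hιdef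
  have hg_eq : ∀ t : Bool,
      (fun ω => if T ω = t then (1 : ℝ) else 0) = ι (T ⁻¹' {t}) := by
    intro t; funext ω; by_cases h : T ω = t <;> simp [hιdef, Set.indicator_apply, h]
  have hindint : ∀ s : Set Ω, MeasurableSet s → Integrable (ι s) μ := fun s hs =>
    (integrable_const 1).indicator hs
  have hAmeas : ∀ t : Bool, MeasurableSet (T ⁻¹' {t}) := fun t =>
    hT (measurableSet_singleton t)
  -- pointwise multiplicativity of indicators
  have hιmul : ∀ s t : Set Ω, ι (s ∩ t) = fun ω => ι s ω * ι t ω := by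
    intro s t; funext ω
    by_cases hs : ω ∈ s <;> by_cases ht : ω ∈ t <;>
      simp [hιdef, Set.indicator_apply, hs, ht]
  -- transfer of the propensity to the sub-σ-algebra under conditional independence
  have key1 : ∀ (t : Bool), CondIndepFun (σa φ) hmB T V μ →
      μ[ι (T ⁻¹' {t}) | σa φ] =ᵐ[μ] μ[ι (T ⁻¹' {t}) | σa V] := by
    intro t CI
    refine ae_eq_condExp_of_forall_setIntegral_eq hmV (hindint _ (hAmeas t))
      (fun s _ _ => integrable_condExp.integrableOn) ?_
      (stronglyMeasurable_condExp.mono hBV :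
        StronglyMeasurable[σa V] (μ[ι (T ⁻¹' {t}) | σa φ])).aestronglyMeasurable
    rintro s ⟨t', ht', rfl⟩ -
    have hsm : MeasurableSet (V ⁻¹' t') := hV ht'
    have hprod := (condIndepFun_iff_condExp_inter_preimage_eq_mul
      (hm' := hmB) hT hV).mp CI {t} t' trivial ht'
    have hcm : Integrable (fun x => (μ[ι (T ⁻¹' {t}) | σa φ]) x * ι (V ⁻¹' t') x) μ := by
      refine Integrable.mono' (g := fun x => ‖(μ[ι (T ⁻¹' {t}) | σa φ]) x‖)
        integrable_condExp.norm
        ((stronglyMeasurable_condExp.mono hmB).aestronglyMeasurable.mul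
          ((stronglyMeasurable_const.indicator hsm).aestronglyMeasurable)) ?_
      filter_upwards with x
      by_cases hx : x ∈ V ⁻¹' t' <;>
        simp [hιdef, Set.indicator_apply, hx, abs_nonneg, Real.norm_eq_abs, abs_abs, le_refl]
    calc ∫ x in V ⁻¹' t', (μ[ι (T ⁻¹' {t}) | σa φ]) x ∂μ
        = ∫ x, (μ[ι (T ⁻¹' {t}) | σa φ]) x * ι (V ⁻¹' t') x ∂μ := by
          rw [← integral_indicator hsm]
          refine integral_congr_ae (Filter.Eventually.of_forall fun x => ?_)
          by_cases hx : x ∈ V ⁻¹' t' <;> simp [hιdef, Set.indicator_apply, hx]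
      _ = ∫ x, (μ[fun x => (μ[ι (T ⁻¹' {t}) | σa φ]) x * ι (V ⁻¹' t') x | σa φ]) x ∂μ :=
          (integral_condExp hmB).symm
      _ = ∫ x, (μ[ι (T ⁻¹' {t} ∩ V ⁻¹' t') | σa φ]) x ∂μ := by
          refine integral_congr_ae ?_
          have hmul := condExp_mul_of_stronglyMeasurable_left (m := σa φ) (μ := μ)
            stronglyMeasurable_condExp hcm (hindint _ hsm)
          calc μ[fun x => (μ[ι (T ⁻¹' {t}) | σa φ]) x * ι (V ⁻¹' t') x | σa φ]
              =ᵐ[μ] fun x => (μ[ι (T ⁻¹' {t}) | σa φ]) x * (μ[ι (V ⁻¹' t') | σa φ]) x := hmul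
            _ =ᵐ[μ] μ[ι (T ⁻¹' {t} ∩ V ⁻¹' t') | σa φ] := hprod.symm
      _ = ∫ x, ι (T ⁻¹' {t} ∩ V ⁻¹' t') x ∂μ := integral_condExp hmB
      _ = ∫ x in V ⁻¹' t', ι (T ⁻¹' {t}) x ∂μ := by
          rw [← integral_indicator hsm]
          refine integral_congr_ae (Filter.Eventually.of_forall fun x => ?_)
          by_cases h1 : x ∈ T ⁻¹' {t} <;> by_cases h2 : x ∈ V ⁻¹' t' <;>
            simp [hιdef, Set.indicator_apply, h1, h2]
  -- product rule for `V`-measurable sets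
  have hprodV_meas : ∀ (t' : Set 𝒱), MeasurableSet t' → ∀ b : Bool,
      μ[ι (V ⁻¹' t' ∩ T ⁻¹' {b}) | σa V] =ᵐ[μ]
        fun ω => (μ[ι (V ⁻¹' t') | σa V]) ω * (μ[ι (T ⁻¹' {b}) | σa V]) ω := by
    intro t' ht' b
    have hsm : MeasurableSet (V ⁻¹' t') := hV ht'
    have hiB : StronglyMeasurable[σa V] (ι (V ⁻¹' t')) :=
      stronglyMeasurable_const.indicator ⟨t', ht', rfl⟩
    have hcB : μ[ι (V ⁻¹' t') | σa V] = ι (V ⁻¹' t') :=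
      condExp_of_stronglyMeasurable hmV hiB (hindint _ hsm)
    have hmulint : Integrable (fun ω => ι (V ⁻¹' t') ω * ι (T ⁻¹' {b}) ω) μ := by
      rw [← hιmul]; exact hindint _ (hsm.inter (hAmeas b))
    calc μ[ι (V ⁻¹' t' ∩ T ⁻¹' {b}) | σa V]
        = μ[fun ω => ι (V ⁻¹' t') ω * ι (T ⁻¹' {b}) ω | σa V] := by rw [hιmul]
      _ =ᵐ[μ] fun ω => ι (V ⁻¹' t') ω * (μ[ι (T ⁻¹' {b}) | σa V]) ω :=
          condExp_mul_of_stronglyMeasurable_left hiB hmulint (hindint _ (hAmeas b))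
      _ = fun ω => (μ[ι (V ⁻¹' t') | σa V]) ω * (μ[ι (T ⁻¹' {b}) | σa V]) ω := by rw [hcB]
  -- the core lemma
  have core : ∀ (b : Bool) (f : ℬ → ℝ), Measurable f →
      (μ[ι (T ⁻¹' {b}) | σa V] =ᵐ[μ] fun ω => f (φ ω)) →
      ∀ (D : Set Ω), MeasurableSet D →
      (μ[ι (D ∩ T ⁻¹' {b}) | σa V] =ᵐ[μ]
        fun ω => (μ[ι D | σa V]) ω * (μ[ι (T ⁻¹' {b}) | σa V]) ω) →
      (μ[ι (D ∩ T ⁻¹' {b}) | σa φ] =ᵐ[μ]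
        fun ω => (μ[ι D | σa φ]) ω * (μ[ι (T ⁻¹' {b}) | σa φ]) ω) := by
    intro b f hf hfe D hD hprodV
    have hSM : StronglyMeasurable[σa φ] (fun ω => f (φ ω)) :=
      (hf.comp (comap_measurable φ)).stronglyMeasurable
    have hfe_int : Integrable (fun ω => f (φ ω)) μ := integrable_condExp.congr hfe
    have hfb : μ[ι (T ⁻¹' {b}) | σa φ] =ᵐ[μ] fun ω => f (φ ω) := by
      calc μ[ι (T ⁻¹' {b}) | σa φ]
          =ᵐ[μ] μ[μ[ι (T ⁻¹' {b}) | σa V] | σa φ] := (condExp_condExp_of_le hBV hmV).symm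
        _ =ᵐ[μ] μ[fun ω => f (φ ω) | σa φ] := condExp_congr_ae hfe
        _ = fun ω => f (φ ω) := condExp_of_stronglyMeasurable hmB hSM hfe_int
    have habs : ∀ᵐ ω ∂μ, |f (φ ω)| ≤ 1 := by
      have h0 : 0 ≤ᵐ[μ] μ[ι (T ⁻¹' {b}) | σa V] :=
        condExp_nonneg (Filter.Eventually.of_forall fun ω =>
          Set.indicator_nonneg (fun _ _ => zero_le_one) ω)
      have h1 : μ[ι (T ⁻¹' {b}) | σa V] ≤ᵐ[μ] fun _ => (1 : ℝ) := by
        have := condExp_mono (μ := μ) (m := σa V) (hindint _ (hAmeas b))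
          (integrable_const (1 : ℝ))
          (Filter.Eventually.of_forall fun ω =>
            Set.indicator_le_self' (fun _ _ => zero_le_one) ω)
        rwa [condExp_const hmV] at this
      filter_upwards [hfe, h0, h1] with ω he h0' h1'
      rw [← he]
      rw [abs_le]
      exact ⟨le_trans (by norm_num) h0', h1'⟩
    have hintprod : Integrable (fun ω => f (φ ω) * (μ[ι D | σa V]) ω) μ := by
      refine Integrable.mono' (g := fun ω => ‖(μ[ι D | σa V]) ω‖) integrable_condExp.norm
        (((hSM.mono hmB).aestronglyMeasurable).mul
          ((stronglyMeasurable_condExp.mono hmV).aestronglyMeasurable)) ?_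
      filter_upwards [habs] with ω hω
      rw [Real.norm_eq_abs, abs_mul, Real.norm_eq_abs]
      exact mul_le_of_le_one_left (abs_nonneg _) hω |>.trans le_rfl
    calc μ[ι (D ∩ T ⁻¹' {b}) | σa φ]
        =ᵐ[μ] μ[μ[ι (D ∩ T ⁻¹' {b}) | σa V] | σa φ] := (condExp_condExp_of_le hBV hmV).symm
      _ =ᵐ[μ] μ[fun ω => f (φ ω) * (μ[ι D | σa V]) ω | σa φ] := by
          refine condExp_congr_ae (hprodV.trans ?_)
          filter_upwards [hfe] with ω he
          rw [← he, mul_comm]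
      _ =ᵐ[μ] fun ω => f (φ ω) * (μ[μ[ι D | σa V] | σa φ]) ω :=
          condExp_mul_of_stronglyMeasurable_left hSM hintprod integrable_condExp
      _ =ᵐ[μ] fun ω => (μ[ι D | σa φ]) ω * (μ[ι (T ⁻¹' {b}) | σa φ]) ω := by
          filter_upwards [condExp_condExp_of_le (f := ι D) hBV hmV, hfb] with ω h1 h2
          rw [h1, h2, mul_comm]
  -- reduction of arbitrary `Set Bool` to singletons
  have bool_cases : ∀ (C : Set Ω),
      (∀ b : Bool, μ[ι (C ∩ T ⁻¹' {b}) | σa φ] =ᵐ[μ]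
        fun ω => (μ[ι C | σa φ]) ω * (μ[ι (T ⁻¹' {b}) | σa φ]) ω) →
      ∀ u : Set Bool, μ[ι (C ∩ T ⁻¹' u) | σa φ] =ᵐ[μ]
        fun ω => (μ[ι C | σa φ]) ω * (μ[ι (T ⁻¹' u) | σa φ]) ω := by
    intro C hb u
    by_cases h1 : true ∈ u <;> by_cases h2 : false ∈ u
    · have hu : T ⁻¹' u = Set.univ := by
        apply Set.eq_univ_of_forall
        intro ω
        rcases Bool.dichotomy (T ω) with hc | hc
        · show T ω ∈ u
          rw [hc]; exact h2
        · show T ω ∈ u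
          rw [hc]; exact h1
      rw [hu, Set.inter_univ]
      have : ι Set.univ = fun _ => (1 : ℝ) := by
        funext ω; simp [hιdef]
      rw [this, condExp_const hmB]
      filter_upwards with ω
      simp
    · have hu : T ⁻¹' u = T ⁻¹' {true} := by
        ext ω; cases hc : T ω <;> simp [hc, h1, h2]
      rw [hu]; exact hb true
    · have hu : T ⁻¹' u = T ⁻¹' {false} := by
        ext ω; cases hc : T ω <;> simp [hc, h1, h2]
      rw [hu]; exact hb false
    · have hu : T ⁻¹' u = ∅ := by
        ext ω; cases hc : T ω <;> simp [hc, h1, h2]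
      rw [hu, Set.inter_empty]
      have : ι (∅ : Set Ω) = fun _ => (0 : ℝ) := by
        funext ω; simp [hιdef]
      rw [this]
      have h0 : μ[(fun _ => (0 : ℝ)) | σa φ] = fun _ => (0 : ℝ) := condExp_const hmB 0
      rw [h0]
      filter_upwards with ω
      simp
  constructor
  · constructor
    · intro CI
      obtain ⟨f, hf, hfeq⟩ := measurable_factor φ (μ[ι (T ⁻¹' {true}) | σa φ])
        stronglyMeasurable_condExp.measurable
      refine ⟨f, hf, ?_⟩
      rw [hg_eq true]
      exact (key1 true CI).symm.trans (Filter.Eventually.of_forall fun ω => hfeq ω)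
    · rintro ⟨f, hf, hfe⟩
      rw [hg_eq true] at hfe
      have hfe_false : μ[ι (T ⁻¹' {false}) | σa V] =ᵐ[μ] fun ω => 1 - f (φ ω) := by
        have hneg : ι (T ⁻¹' {false}) = fun ω => 1 - ι (T ⁻¹' {true}) ω := by
          funext ω
          rcases Bool.dichotomy (T ω) with hc | hc <;>
            simp [hιdef, Set.indicator_apply, Set.mem_preimage, hc]
        rw [hneg]
        have hsub := condExp_sub (m := σa V) (μ := μ) (integrable_const (1 : ℝ))
          (hindint _ (hAmeas true))
        calc μ[(fun ω => 1 - ι (T ⁻¹' {true}) ω) | σa V]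
            =ᵐ[μ] μ[(fun _ => (1 : ℝ)) | σa V] - μ[ι (T ⁻¹' {true}) | σa V] := hsub
          _ =ᵐ[μ] fun ω => 1 - f (φ ω) := by
              rw [condExp_const hmV]
              filter_upwards [hfe] with ω h
              simp [h, hφdef]
      rw [condIndepFun_iff_condExp_inter_preimage_eq_mul (hm' := hmB) hT hV]
      intro s t' hs ht'
      have hbase : ∀ b : Bool, μ[ι (V ⁻¹' t' ∩ T ⁻¹' {b}) | σa φ] =ᵐ[μ]
          fun ω => (μ[ι (V ⁻¹' t') | σa φ]) ω * (μ[ι (T ⁻¹' {b}) | σa φ]) ω := by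
        intro b
        rcases Bool.dichotomy b with hb | hb <;> subst hb
        · exact core false (fun x => 1 - f x) (measurable_const.sub hf) hfe_false
            (V ⁻¹' t') (hV ht') (hprodV_meas t' ht' false)
        · exact core true f hf hfe (V ⁻¹' t') (hV ht') (hprodV_meas t' ht' true)
      have hmain := bool_cases (V ⁻¹' t') hbase s
      rw [Set.inter_comm (T ⁻¹' s) (V ⁻¹' t')]
      refine hmain.trans ?_
      filter_upwards with ω
      rw [mul_comm]
  · intro hYT hpos CI
    have hfac : ∀ b : Bool, ∃ f : ℬ → ℝ, Measurable f ∧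
        (μ[ι (T ⁻¹' {b}) | σa V] =ᵐ[μ] fun ω => f (φ ω)) := by
      intro b
      obtain ⟨f, hf, hfeq⟩ := measurable_factor φ (μ[ι (T ⁻¹' {b}) | σa φ])
        stronglyMeasurable_condExp.measurable
      exact ⟨f, hf, (key1 b CI).symm.trans (Filter.Eventually.of_forall fun ω => hfeq ω)⟩
    constructor
    · intro t
      rw [condIndepFun_iff_condExp_inter_preimage_eq_mul (hm' := hmB) (hY t) hT]
      intro s u hs hu
      have hC : MeasurableSet ((Y t) ⁻¹' s) := hY t hs
      refine bool_cases ((Y t) ⁻¹' s) (fun b => ?_) u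
      obtain ⟨f, hf, hfe⟩ := hfac b
      have hprodV := (condIndepFun_iff_condExp_inter_preimage_eq_mul
        (hm' := hmV) (hY t) hT).mp (hYT t) s {b} hs trivial
      exact core b f hf hfe ((Y t) ⁻¹' s) hC hprodV
    · intro t
      have hp := hpos t
      rw [hg_eq t] at hp
      rw [hg_eq t]
      filter_upwards [hp, key1 t CI] with ω h1 h2
      rw [h2]
      exact h1
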